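/- arXiv:2601.13163 — 3 statements merged into one kernel-verified Lean document; each statement's English description precedes it below -/
import Mathlib

section
/- Let L1, L2, L3 be natural numbers with 3 ≤ L1 < L2 < L3 and L1 + L2 + L3 even. Set A1 = ⌊(L1−1)/2⌋, B1 = ⌊(L2−1)/2⌋, B2 = ⌊(L3−1)/2⌋, and the integers K1 = (L1+L2−L3)/2, K2 = (L1−L2+L3)/2, K3 = (−L1+L2+L3)/2. Define the rational functions g1(A,K) = (A−K)(K+2+(A−K−1)(K+2A+8)/6), g2(A,K) = (A+1)(−K+A(2A+4−3K)/6), g3(A,B,K) = (A+1)(B−A)(A+B−2K+1)/2, g4(A,B,K) = A(A(B−K+1)+(A−1)(A−3B+3K−2)/6), g5(A,B,K) = (A+1)(B−K)(B−K+1)/2, g6(A,B,K) = (A+B−K)(A+B−K+(A+B−K−1)(A+B−K−2)/6). Then the cardinality of S(L1,L2,L3), viewed as a rational number, equals ⌊(L1+1)/2⌋·⌊(L2+1)/2⌋·⌊(L3+1)/2⌋ − T2 − T3 − g4(A1,B1,K1) − T5 − g4(A1,B2,K2) − g6(B1,B2,K3), where T2 = g1(A1,K1) if L2+3 ≤ L3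 ≤ L1+L2+1, T2 = g2(A1,K1) if L3 ≥ L1+L2+1, and T2 = 0 otherwise; T3 = g3(A1,B1,K1) if ((L2 ≥ L1+2 and L1 is odd) or L1 is even), and T3 = 0 otherwise; T5 = g5(A1,B2,K2) if L2 ≥ L1+3, and T5 = 0 otherwise. -/
/-- The set of adjacency data `(a,b,c,d,e,f)` of connected multigraphs on three
nodes with degrees `L1, L2, L3`. -/
def S (L1 L2 L3 : ℕ) : Set (ℕ × ℕ × ℕ × ℕ × ℕ × ℕ) :=
  {(a, b, c, d, e, f) : ℕ × ℕ × ℕ × ℕ × ℕ × ℕ |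
    2 * a + d + e = L1 ∧ 2 * b + d + f = L2 ∧ 2 * c + e + f = L3 ∧
    1 ≤ d + e ∧ 1 ≤ d + f ∧ 1 ≤ e + f}

noncomputable def g1 (A K : ℚ) : ℚ := (A - K) * (K + 2 + (A - K - 1) * (K + 2 * A + 8) / 6)

noncomputable def g2 (A K : ℚ) : ℚ := (A + 1) * (-K + A * (2 * A + 4 - 3 * K) / 6)

noncomputable def g3 (A B K : ℚ) : ℚ := (A + 1) * (B - A) * (A + B - 2 * K + 1) / 2

noncomputable def g4 (A B K : ℚ) : ℚ :=
  A * (A * (B - K + 1) + (A - 1) * (A - 3 * B + 3 * K - 2) / 6)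

noncomputable def g5 (A B K : ℚ) : ℚ := (A + 1) * (B - K) * (B - K + 1) / 2

noncomputable def g6 (A B K : ℚ) : ℚ :=
  (A + B - K) * (A + B - K + (A + B - K - 1) * (A + B - K - 2) / 6)


open Finset

noncomputable def m0 (t : ℤ) : ℚ := if 0 ≤ t then (t : ℚ) else 0

noncomputable def tri (t : ℤ) : ℚ := if -1 ≤ t then (t : ℚ) * ((t : ℚ) + 1) / 2 else 0

noncomputable def tet (t : ℤ) : ℚ :=
  if -2 ≤ t then (t : ℚ) * ((t : ℚ) + 1) * ((t : ℚ) + 2) / 6 else 0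

lemma tet_poly (t : ℤ) (h : -2 ≤ t) : tet t = (t : ℚ) * ((t : ℚ) + 1) * ((t : ℚ) + 2) / 6 :=
  if_pos h

lemma tet_zero (t : ℤ) (h : t ≤ 0) : tet t = 0 := by
  unfold tet
  split_ifs with h'
  · interval_cases t <;> norm_num
  · rfl

lemma tri_step (n : ℤ) : tri (n + 1) = tri n + m0 (n + 1) := by
  unfold tri m0
  split_ifs <;>
    first
      | (exfalso; omega)
      | (push_cast; ring1)
      | (have hn : n = -1 ∨ n = -2 := (by omega); rcases hn with hn|hn <;> (subst hn; norm_num))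
      | norm_num

lemma tet_step (n : ℤ) : tet (n + 1) = tet n + tri (n + 1) := by
  unfold tet tri
  split_ifs <;>
    first
      | (exfalso; omega)
      | (push_cast; ring1)
      | (have hn : n = -3 := (by omega); subst hn; norm_num)
      | norm_num

lemma sum_m0 (K : ℤ) : ∀ B : ℕ, ∑ b ∈ range (B + 1), m0 ((b : ℤ) - K)
    = tri ((B : ℤ) - K) - tri (-K - 1)
  | 0 => by
      have h := tri_step (-K - 1)
      have e : (-K - 1) + 1 = ((0 : ℕ) : ℤ) - K := by push_cast; ring
      rw [e] at h
      rw [show (0:ℕ) + 1 = 1 from rfl, sum_range_one]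
      rw [h]; ring_nf
  | (B + 1) => by
      rw [sum_range_succ, sum_m0 K B]
      have h := tri_step ((B : ℤ) - K)
      have e : ((B : ℤ) - K) + 1 = ((B + 1 : ℕ) : ℤ) - K := by push_cast; ring
      rw [e] at h
      rw [h]; ring

lemma sum_tri (K : ℤ) : ∀ B : ℕ, ∑ b ∈ range (B + 1), tri ((b : ℤ) - K)
    = tet ((B : ℤ) - K) - tet (-K - 1)
  | 0 => by
      have h := tet_step (-K - 1)
      have e : (-K - 1) + 1 = ((0 : ℕ) : ℤ) - K := by push_cast; ring
      rw [e] at h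
      rw [show (0:ℕ) + 1 = 1 from rfl, sum_range_one]
      rw [h]; ring_nf
  | (B + 1) => by
      rw [sum_range_succ, sum_tri K B]
      have h := tet_step ((B : ℤ) - K)
      have e : ((B : ℤ) - K) + 1 = ((B + 1 : ℕ) : ℤ) - K := by push_cast; ring
      rw [e] at h
      rw [h]; ring

lemma sumF (A B : ℕ) (K : ℤ) :
    ∑ a ∈ range (A + 1), ∑ b ∈ range (B + 1), m0 ((a : ℤ) + b - K)
      = (tet ((A : ℤ) - (K - B)) - tet (-(K - B) - 1))
        - (tet ((A : ℤ) - (K + 1)) - tet (-(K + 1) - 1)) := by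
  have h1 : ∀ a : ℕ, ∑ b ∈ range (B + 1), m0 ((a : ℤ) + b - K)
      = tri ((a : ℤ) - (K - B)) - tri ((a : ℤ) - (K + 1)) := by
    intro a
    have h := sum_m0 (K - a) B
    have e0 : ∑ b ∈ range (B + 1), m0 ((a : ℤ) + b - K)
        = ∑ b ∈ range (B + 1), m0 ((b : ℤ) - (K - a)) := by
      refine sum_congr rfl fun b _ => ?_
      congr 1; ring
    rw [e0, h]
    congr 1
    · congr 1; ring
    · congr 1; ring
  calc ∑ a ∈ range (A + 1), ∑ b ∈ range (B + 1), m0 ((a : ℤ) + b - K)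
      = ∑ a ∈ range (A + 1), (tri ((a : ℤ) - (K - B)) - tri ((a : ℤ) - (K + 1))) :=
        sum_congr rfl fun a _ => h1 a
    _ = (∑ a ∈ range (A + 1), tri ((a : ℤ) - (K - B)))
        - ∑ a ∈ range (A + 1), tri ((a : ℤ) - (K + 1)) := by rw [sum_sub_distrib]
    _ = _ := by rw [sum_tri, sum_tri]

lemma card_filter_lt (C : ℕ) (t : ℤ) :
    ((((range (C + 1)).filter fun c : ℕ => (c : ℤ) < t).card : ℚ)) = m0 t - m0 (t - (C + 1)) := by
  have h : ((range (C + 1)).filter fun c : ℕ => (c : ℤ) < t) = range (min (C + 1) t.toNat) := by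
    ext c
    simp only [mem_filter, mem_range, lt_min_iff]
    omega
  rw [h, card_range]
  unfold m0
  split_ifs with h1 h2 h2
  · have hm : min (C + 1) t.toNat = C + 1 := by omega
    rw [hm]; push_cast; ring
  · have hm : min (C + 1) t.toNat = t.toNat := by omega
    rw [hm]
    have : ((t.toNat : ℤ) : ℚ) = (t : ℚ) := by rw [Int.toNat_of_nonneg h1]
    push_cast at this ⊢
    rw [this]; ring
  · exfalso; omega
  · have hm : min (C + 1) t.toNat = 0 := by omega
    rw [hm]; norm_num

def Pq (k1 k2 k3 : ℤ) (x : ℕ × ℕ × ℕ) : Prop :=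
  (x.1 : ℤ) + x.2.1 - x.2.2 ≤ k1 ∧ (x.1 : ℤ) + x.2.2 - x.2.1 ≤ k2 ∧
    (x.2.1 : ℤ) + x.2.2 - x.1 ≤ k3

instance (k1 k2 k3 : ℤ) (x : ℕ × ℕ × ℕ) : Decidable (Pq k1 k2 k3 x) :=
  inferInstanceAs (Decidable (_ ≤ _ ∧ _ ≤ _ ∧ _ ≤ _))

set_option maxHeartbeats 4000000 in
theorem main_count (L1 L2 L3 : ℕ) (h1 : 3 ≤ L1) (h12 : L1 < L2) (h23 : L2 < L3)
    (heven : Even (L1 + L2 + L3)) :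
    ((S L1 L2 L3).ncard : ℚ) =
      (((L1 + 1) / 2 : ℕ) : ℚ) * (((L2 + 1) / 2 : ℕ) : ℚ) * (((L3 + 1) / 2 : ℕ) : ℚ)
      - (if L2 + 3 ≤ L3 ∧ L3 ≤ L1 + L2 + 1 then
            g1 (((L1 - 1) / 2 : ℕ) : ℚ) (((L1 : ℚ) + L2 - L3) / 2)
         else if L1 + L2 + 1 ≤ L3 then
            g2 (((L1 - 1) / 2 : ℕ) : ℚ) (((L1 : ℚ) + L2 - L3) / 2)
         else 0)
      - (if (L1 + 2 ≤ L2 ∧ Odd L1) ∨ Even L1 then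
            g3 (((L1 - 1) / 2 : ℕ) : ℚ) (((L2 - 1) / 2 : ℕ) : ℚ) (((L1 : ℚ) + L2 - L3) / 2)
         else 0)
      - g4 (((L1 - 1) / 2 : ℕ) : ℚ) (((L2 - 1) / 2 : ℕ) : ℚ) (((L1 : ℚ) + L2 - L3) / 2)
      - (if L1 + 3 ≤ L2 then
            g5 (((L1 - 1) / 2 : ℕ) : ℚ) (((L3 - 1) / 2 : ℕ) : ℚ) (((L1 : ℚ) - L2 + L3) / 2)
         else 0)
      - g4 (((L1 - 1) / 2 : ℕ) : ℚ) (((L3 - 1) / 2 : ℕ) : ℚ) (((L1 : ℚ) - L2 + L3) / 2)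
      - g6 (((L2 - 1) / 2 : ℕ) : ℚ) (((L3 - 1) / 2 : ℕ) : ℚ)
          ((-(L1 : ℚ) + L2 + L3) / 2) := by
  rw [Nat.even_iff] at heven
  obtain ⟨k1, hk1⟩ : ∃ k : ℤ, 2 * k = (L1 : ℤ) + L2 - L3 := ⟨((L1:ℤ)+L2-L3)/2, by omega⟩
  obtain ⟨k2, hk2⟩ : ∃ k : ℤ, 2 * k = (L1 : ℤ) - L2 + L3 := ⟨((L1:ℤ)-L2+L3)/2, by omega⟩
  obtain ⟨k3, hk3⟩ : ∃ k : ℤ, 2 * k = -(L1 : ℤ) + L2 + L3 := ⟨(-(L1:ℤ)+L2+L3)/2, by omega⟩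
  set a1 : ℕ := (L1 - 1) / 2 with ha1
  set b1 : ℕ := (L2 - 1) / 2 with hb1
  set b2 : ℕ := (L3 - 1) / 2 with hb2
  set box : Finset (ℕ × ℕ × ℕ) := range (a1+1) ×ˢ range (b1+1) ×ˢ range (b2+1) with hbox
  -- Step A: identify S with a filtered finset of triples
  have hncard : (S L1 L2 L3).ncard = (box.filter (Pq k1 k2 k3)).card := by
    have hS : S L1 L2 L3 = ↑((box.filter (Pq k1 k2 k3)).image (fun x : ℕ × ℕ × ℕ =>
        (x.1, x.2.1, x.2.2, (k1 - x.1 - x.2.1 + x.2.2).toNat,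
         (k2 - x.1 + x.2.1 - x.2.2).toNat, (k3 + x.1 - x.2.1 - x.2.2).toNat))) := by
      ext ⟨a, b, c, d, e, f⟩
      simp only [S, Set.mem_setOf_eq, Finset.coe_image, Set.mem_image, Finset.mem_coe,
        Finset.mem_filter, hbox, Finset.mem_product, Finset.mem_range, Pq, Prod.mk.injEq]
      constructor
      · rintro ⟨e1, e2, e3, i1, i2, i3⟩
        refine ⟨⟨a, b, c⟩, ⟨⟨?_, ?_, ?_⟩, ?_, ?_, ?_⟩, ?_, ?_, ?_, ?_, ?_, ?_⟩ <;>
          dsimp only <;> omega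
      · rintro ⟨⟨x, y, z⟩, ⟨⟨hx, hy, hz⟩, p1, p2, p3⟩, q1, q2, q3, q4, q5, q6⟩
        dsimp only at p1 p2 p3 q1 q2 q3 q4 q5 q6 hx hy hz
        subst q1; subst q2; subst q3
        refine ⟨?_, ?_, ?_, ?_, ?_, ?_⟩ <;> omega
    rw [hS, Set.ncard_coe_finset]
    apply Finset.card_image_of_injOn
    rintro ⟨x1, x2, x3⟩ - ⟨y1, y2, y3⟩ - h
    simp only [Prod.mk.injEq] at h
    obtain ⟨r1, r2, r3, -⟩ := h
    simp [r1, r2, r3]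
  -- Step B: inclusion-exclusion over the box
  have hd12 : Disjoint (box.filter fun x => (x.2.2 : ℤ) < (x.1 : ℤ) + x.2.1 - k1)
      (box.filter fun x => (x.2.1 : ℤ) < (x.1 : ℤ) + x.2.2 - k2) := by
    refine Finset.disjoint_left.mpr fun x hx1 hx2 => ?_
    simp only [Finset.mem_filter, hbox, Finset.mem_product, Finset.mem_range] at hx1 hx2
    omega
  have hd13 : Disjoint (box.filter fun x => (x.2.2 : ℤ) < (x.1 : ℤ) + x.2.1 - k1)
      (box.filter fun x => (x.1 : ℤ) < (x.2.1 : ℤ) + x.2.2 - k3) := by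
    refine Finset.disjoint_left.mpr fun x hx1 hx2 => ?_
    simp only [Finset.mem_filter, hbox, Finset.mem_product, Finset.mem_range] at hx1 hx2
    omega
  have hd23 : Disjoint (box.filter fun x => (x.2.1 : ℤ) < (x.1 : ℤ) + x.2.2 - k2)
      (box.filter fun x => (x.1 : ℤ) < (x.2.1 : ℤ) + x.2.2 - k3) := by
    refine Finset.disjoint_left.mpr fun x hx1 hx2 => ?_
    simp only [Finset.mem_filter, hbox, Finset.mem_product, Finset.mem_range] at hx1 hx2
    omega
  have hneg : box.filter (fun x => ¬ Pq k1 k2 k3 x) =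
      ((box.filter fun x => (x.2.2 : ℤ) < (x.1 : ℤ) + x.2.1 - k1) ∪
        (box.filter fun x => (x.2.1 : ℤ) < (x.1 : ℤ) + x.2.2 - k2)) ∪
        (box.filter fun x => (x.1 : ℤ) < (x.2.1 : ℤ) + x.2.2 - k3) := by
    rw [← Finset.filter_or, ← Finset.filter_or]
    refine Finset.filter_congr fun x hx => ?_
    simp only [Pq]
    constructor
    · intro h; omega
    · intro h; omega
  have hsplit : (box.filter (Pq k1 k2 k3)).card
      + ((box.filter fun x => (x.2.2 : ℤ) < (x.1 : ℤ) + x.2.1 - k1).card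
        + (box.filter fun x => (x.2.1 : ℤ) < (x.1 : ℤ) + x.2.2 - k2).card
        + (box.filter fun x => (x.1 : ℤ) < (x.2.1 : ℤ) + x.2.2 - k3).card) = box.card := by
    have h0 := Finset.card_filter_add_card_filter_not (s := box) (p := Pq k1 k2 k3)
    rw [hneg, Finset.card_union_of_disjoint (Finset.disjoint_union_left.mpr ⟨hd13, hd23⟩),
      Finset.card_union_of_disjoint hd12] at h0
    omega
  -- Step C: evaluate the three violation counts
  have hme : ∀ (A B C : ℕ) (K : ℤ),
      ((∑ a ∈ range (A+1), ∑ b ∈ range (B+1),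
        ((range (C+1)).filter fun c : ℕ => (c : ℤ) < (a : ℤ) + b - K).card : ℕ) : ℚ)
      = ((tet ((A : ℤ) - (K - B)) - tet (-(K - B) - 1))
          - (tet ((A : ℤ) - (K + 1)) - tet (-(K + 1) - 1)))
        - ((tet ((A : ℤ) - (K + (C + 1) - B)) - tet (-(K + (C + 1) - B) - 1))
          - (tet ((A : ℤ) - (K + (C + 1) + 1)) - tet (-(K + (C + 1) + 1) - 1))) := by
    intro A B C K
    rw [← sumF, ← sumF, ← Finset.sum_sub_distrib]
    push_cast
    refine Finset.sum_congr rfl fun a _ => ?_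
    rw [← Finset.sum_sub_distrib]
    refine Finset.sum_congr rfl fun b _ => ?_
    rw [card_filter_lt]
    have harg : (a : ℤ) + b - K - ((C : ℤ) + 1) = (a : ℤ) + b - (K + ((C : ℤ) + 1)) := by ring
    rw [harg]
  have hc1 : (box.filter fun x => (x.2.2 : ℤ) < (x.1 : ℤ) + x.2.1 - k1).card
      = ∑ a ∈ range (a1+1), ∑ b ∈ range (b1+1),
          ((range (b2+1)).filter fun c : ℕ => (c : ℤ) < (a : ℤ) + b - k1).card := by
    rw [hbox, Finset.card_filter, Finset.sum_product]
    refine Finset.sum_congr rfl fun a _ => ?_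
    rw [Finset.sum_product]
    refine Finset.sum_congr rfl fun b _ => ?_
    rw [Finset.card_filter]
  have hc2 : (box.filter fun x => (x.2.1 : ℤ) < (x.1 : ℤ) + x.2.2 - k2).card
      = ∑ a ∈ range (a1+1), ∑ c ∈ range (b2+1),
          ((range (b1+1)).filter fun b : ℕ => (b : ℤ) < (a : ℤ) + c - k2).card := by
    rw [hbox, Finset.card_filter, Finset.sum_product]
    refine Finset.sum_congr rfl fun a _ => ?_
    rw [Finset.sum_product, Finset.sum_comm]
    refine Finset.sum_congr rfl fun c _ => ?_
    rw [Finset.card_filter]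
  have hc3 : (box.filter fun x => (x.1 : ℤ) < (x.2.1 : ℤ) + x.2.2 - k3).card
      = ∑ b ∈ range (b1+1), ∑ c ∈ range (b2+1),
          ((range (a1+1)).filter fun a : ℕ => (a : ℤ) < (b : ℤ) + c - k3).card := by
    rw [hbox, Finset.card_filter, Finset.sum_product, Finset.sum_comm, Finset.sum_product]
    refine Finset.sum_congr rfl fun b _ => ?_
    refine Finset.sum_congr rfl fun c _ => ?_
    rw [Finset.card_filter]
  have hboxcard : (box.card : ℚ) = ((a1 : ℚ) + 1) * ((b1 : ℚ) + 1) * ((b2 : ℚ) + 1) := by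
    rw [hbox, Finset.card_product, Finset.card_product, Finset.card_range, Finset.card_range,
      Finset.card_range]
    push_cast
    ring
  -- assemble the count as rationals
  have hkey : ((S L1 L2 L3).ncard : ℚ) = ((a1 : ℚ) + 1) * ((b1 : ℚ) + 1) * ((b2 : ℚ) + 1)
      - (((tet ((a1 : ℤ) - (k1 - b1)) - tet (-(k1 - b1) - 1))
          - (tet ((a1 : ℤ) - (k1 + 1)) - tet (-(k1 + 1) - 1)))
        - ((tet ((a1 : ℤ) - (k1 + (b2 + 1) - b1)) - tet (-(k1 + (b2 + 1) - b1) - 1))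
          - (tet ((a1 : ℤ) - (k1 + (b2 + 1) + 1)) - tet (-(k1 + (b2 + 1) + 1) - 1))))
      - (((tet ((a1 : ℤ) - (k2 - b2)) - tet (-(k2 - b2) - 1))
          - (tet ((a1 : ℤ) - (k2 + 1)) - tet (-(k2 + 1) - 1)))
        - ((tet ((a1 : ℤ) - (k2 + (b1 + 1) - b2)) - tet (-(k2 + (b1 + 1) - b2) - 1))
          - (tet ((a1 : ℤ) - (k2 + (b1 + 1) + 1)) - tet (-(k2 + (b1 + 1) + 1) - 1))))
      - (((tet ((b1 : ℤ) - (k3 - b2)) - tet (-(k3 - b2) - 1))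
          - (tet ((b1 : ℤ) - (k3 + 1)) - tet (-(k3 + 1) - 1)))
        - ((tet ((b1 : ℤ) - (k3 + (a1 + 1) - b2)) - tet (-(k3 + (a1 + 1) - b2) - 1))
          - (tet ((b1 : ℤ) - (k3 + (a1 + 1) + 1)) - tet (-(k3 + (a1 + 1) + 1) - 1)))) := by
    rw [hncard]
    have hq : ((box.filter (Pq k1 k2 k3)).card : ℚ) = (box.card : ℚ)
        - ((((box.filter fun x => (x.2.2 : ℤ) < (x.1 : ℤ) + x.2.1 - k1).card : ℕ) : ℚ)
          + (((box.filter fun x => (x.2.1 : ℤ) < (x.1 : ℤ) + x.2.2 - k2).card : ℕ) : ℚ)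
          + (((box.filter fun x => (x.1 : ℤ) < (x.2.1 : ℤ) + x.2.2 - k3).card : ℕ) : ℚ)) := by
      have hq0 := congrArg (Nat.cast : ℕ → ℚ) hsplit
      push_cast at hq0 ⊢
      linarith
    rw [hq, hboxcard, hc1, hc2, hc3, hme, hme, hme]
    ring
  rw [hkey]
  have hK1 : ((L1 : ℚ) + L2 - L3) / 2 = (k1 : ℚ) := by
    rw [div_eq_iff (by norm_num : (2:ℚ) ≠ 0)]
    exact_mod_cast (show (L1:ℤ) + L2 - L3 = k1 * 2 by omega)
  have hK2 : ((L1 : ℚ) - L2 + L3) / 2 = (k2 : ℚ) := by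
    rw [div_eq_iff (by norm_num : (2:ℚ) ≠ 0)]
    exact_mod_cast (show (L1:ℤ) - L2 + L3 = k2 * 2 by omega)
  have hK3 : (-(L1 : ℚ) + L2 + L3) / 2 = (k3 : ℚ) := by
    rw [div_eq_iff (by norm_num : (2:ℚ) ≠ 0)]
    exact_mod_cast (show -(L1:ℤ) + L2 + L3 = k3 * 2 by omega)
  have hA1 : (((L1 + 1) / 2 : ℕ) : ℚ) = (a1 : ℚ) + 1 := by
    exact_mod_cast (show ((L1 + 1) / 2 : ℕ) = a1 + 1 by omega)
  have hB1 : (((L2 + 1) / 2 : ℕ) : ℚ) = (b1 : ℚ) + 1 := by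
    exact_mod_cast (show ((L2 + 1) / 2 : ℕ) = b1 + 1 by omega)
  have hB2 : (((L3 + 1) / 2 : ℕ) : ℚ) = (b2 : ℚ) + 1 := by
    exact_mod_cast (show ((L3 + 1) / 2 : ℕ) = b2 + 1 by omega)
  rw [hK1, hK2, hK3, hA1, hB1, hB2]
  have hT3 : (if (L1 + 2 ≤ L2 ∧ Odd L1) ∨ Even L1 then g3 (a1 : ℚ) (b1 : ℚ) (k1 : ℚ) else 0)
      = g3 (a1 : ℚ) (b1 : ℚ) (k1 : ℚ) := by
    split_ifs with h
    · rfl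
    · rw [not_or] at h
      obtain ⟨hA, hB⟩ := h
      rw [Nat.not_even_iff] at hB
      have hodd : Odd L1 := Nat.odd_iff.mpr hB
      have hle : ¬ (L1 + 2 ≤ L2) := fun hle => hA ⟨hle, hodd⟩
      have hba : (b1 : ℚ) = (a1 : ℚ) := by exact_mod_cast (show b1 = a1 by omega)
      rw [g3, hba]; ring
  have hT5 : (if L1 + 3 ≤ L2 then g5 (a1 : ℚ) (b2 : ℚ) (k2 : ℚ) else 0)
      = g5 (a1 : ℚ) (b2 : ℚ) (k2 : ℚ) := by
    split_ifs with h
    · rfl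
    · have hbk : (b2 : ℚ) = (k2 : ℚ) := by exact_mod_cast (show (b2 : ℤ) = k2 by omega)
      rw [g5, hbk]; ring
  rw [hT3, hT5]
  rw [tet_poly ((a1:ℤ) - (k1 - (b1:ℤ))) (by omega),
        tet_poly (-(k1 - (b1:ℤ)) - 1) (by omega),
        tet_poly ((a1:ℤ) - (k1 + 1)) (by omega),
        tet_zero ((a1:ℤ) - (k1 + ((b2:ℤ) + 1) - (b1:ℤ))) (by omega),
        tet_zero (-(k1 + ((b2:ℤ) + 1) - (b1:ℤ)) - 1) (by omega),
        tet_zero ((a1:ℤ) - (k1 + ((b2:ℤ) + 1) + 1)) (by omega),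
        tet_zero (-(k1 + ((b2:ℤ) + 1) + 1) - 1) (by omega),
        tet_poly ((a1:ℤ) - (k2 - (b2:ℤ))) (by omega),
        tet_poly (-(k2 - (b2:ℤ)) - 1) (by omega),
        tet_zero ((a1:ℤ) - (k2 + 1)) (by omega),
        tet_zero (-(k2 + 1) - 1) (by omega),
        tet_zero ((a1:ℤ) - (k2 + ((b1:ℤ) + 1) - (b2:ℤ))) (by omega),
        tet_zero (-(k2 + ((b1:ℤ) + 1) - (b2:ℤ)) - 1) (by omega),
        tet_zero ((a1:ℤ) - (k2 + ((b1:ℤ) + 1) + 1)) (by omega),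
        tet_zero (-(k2 + ((b1:ℤ) + 1) + 1) - 1) (by omega),
        tet_poly ((b1:ℤ) - (k3 - (b2:ℤ))) (by omega),
        tet_zero (-(k3 - (b2:ℤ)) - 1) (by omega),
        tet_zero ((b1:ℤ) - (k3 + 1)) (by omega),
        tet_zero (-(k3 + 1) - 1) (by omega),
        tet_zero ((b1:ℤ) - (k3 + ((a1:ℤ) + 1) - (b2:ℤ))) (by omega),
        tet_zero (-(k3 + ((a1:ℤ) + 1) - (b2:ℤ)) - 1) (by omega),
        tet_zero ((b1:ℤ) - (k3 + ((a1:ℤ) + 1) + 1)) (by omega),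
        tet_zero (-(k3 + ((a1:ℤ) + 1) + 1) - 1) (by omega)]
  have r2 : (k2 : ℚ) = (L1 : ℚ) - (k1 : ℚ) := by
    exact_mod_cast (show (k2 : ℤ) = (L1 : ℤ) - k1 by omega)
  have r3 : (k3 : ℚ) = (L2 : ℚ) - (k1 : ℚ) := by
    exact_mod_cast (show (k3 : ℤ) = (L2 : ℤ) - k1 by omega)
  split_ifs with hcc1 hcc2
  · -- K1 ≥ 0, L2 + 3 ≤ L3 : branch g1
    rw [tet_zero (-(k1 + 1) - 1) (by omega)]
    simp only [g1, g2, g3, g4, g5, g6]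
    push_cast
    rcases Nat.mod_two_eq_zero_or_one L1 with hp1 | hp1 <;>
      rcases Nat.mod_two_eq_zero_or_one L2 with hp2 | hp2
    · have qL1 : (L1 : ℚ) = 2 * (a1 : ℚ) + 2 := by
        exact_mod_cast (show (L1 : ℤ) = 2 * (a1 : ℤ) + 2 by omega)
      have qL2 : (L2 : ℚ) = 2 * (b1 : ℚ) + 2 := by
        exact_mod_cast (show (L2 : ℤ) = 2 * (b1 : ℤ) + 2 by omega)
      have qb2 : (b2 : ℚ) = (a1 : ℚ) + (b1 : ℚ) + 1 - (k1 : ℚ) := by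
        exact_mod_cast (show (b2 : ℤ) = (a1 : ℤ) + (b1 : ℤ) + 1 - k1 by omega)
      rw [r2, r3, qL1, qL2, qb2]
      ring
    · have qL1 : (L1 : ℚ) = 2 * (a1 : ℚ) + 2 := by
        exact_mod_cast (show (L1 : ℤ) = 2 * (a1 : ℤ) + 2 by omega)
      have qL2 : (L2 : ℚ) = 2 * (b1 : ℚ) + 1 := by
        exact_mod_cast (show (L2 : ℤ) = 2 * (b1 : ℤ) + 1 by omega)
      have qb2 : (b2 : ℚ) = (a1 : ℚ) + (b1 : ℚ) + 1 - (k1 : ℚ) := by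
        exact_mod_cast (show (b2 : ℤ) = (a1 : ℤ) + (b1 : ℤ) + 1 - k1 by omega)
      rw [r2, r3, qL1, qL2, qb2]
      ring
    · have qL1 : (L1 : ℚ) = 2 * (a1 : ℚ) + 1 := by
        exact_mod_cast (show (L1 : ℤ) = 2 * (a1 : ℤ) + 1 by omega)
      have qL2 : (L2 : ℚ) = 2 * (b1 : ℚ) + 2 := by
        exact_mod_cast (show (L2 : ℤ) = 2 * (b1 : ℤ) + 2 by omega)
      have qb2 : (b2 : ℚ) = (a1 : ℚ) + (b1 : ℚ) + 1 - (k1 : ℚ) := by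
        exact_mod_cast (show (b2 : ℤ) = (a1 : ℤ) + (b1 : ℤ) + 1 - k1 by omega)
      rw [r2, r3, qL1, qL2, qb2]
      ring
    · have qL1 : (L1 : ℚ) = 2 * (a1 : ℚ) + 1 := by
        exact_mod_cast (show (L1 : ℤ) = 2 * (a1 : ℤ) + 1 by omega)
      have qL2 : (L2 : ℚ) = 2 * (b1 : ℚ) + 1 := by
        exact_mod_cast (show (L2 : ℤ) = 2 * (b1 : ℤ) + 1 by omega)
      have qb2 : (b2 : ℚ) = (a1 : ℚ) + (b1 : ℚ) - (k1 : ℚ) := by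
        exact_mod_cast (show (b2 : ℤ) = (a1 : ℤ) + (b1 : ℤ) - k1 by omega)
      rw [r2, r3, qL1, qL2, qb2]
      ring
  · -- K1 ≤ -1 : branch g2
    rw [tet_poly (-(k1 + 1) - 1) (by omega)]
    simp only [g1, g2, g3, g4, g5, g6]
    push_cast
    rcases Nat.mod_two_eq_zero_or_one L1 with hp1 | hp1 <;>
      rcases Nat.mod_two_eq_zero_or_one L2 with hp2 | hp2
    · have qL1 : (L1 : ℚ) = 2 * (a1 : ℚ) + 2 := by
        exact_mod_cast (show (L1 : ℤ) = 2 * (a1 : ℤ) + 2 by omega)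
      have qL2 : (L2 : ℚ) = 2 * (b1 : ℚ) + 2 := by
        exact_mod_cast (show (L2 : ℤ) = 2 * (b1 : ℤ) + 2 by omega)
      have qb2 : (b2 : ℚ) = (a1 : ℚ) + (b1 : ℚ) + 1 - (k1 : ℚ) := by
        exact_mod_cast (show (b2 : ℤ) = (a1 : ℤ) + (b1 : ℤ) + 1 - k1 by omega)
      rw [r2, r3, qL1, qL2, qb2]
      ring
    · have qL1 : (L1 : ℚ) = 2 * (a1 : ℚ) + 2 := by
        exact_mod_cast (show (L1 : ℤ) = 2 * (a1 : ℤ) + 2 by omega)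
      have qL2 : (L2 : ℚ) = 2 * (b1 : ℚ) + 1 := by
        exact_mod_cast (show (L2 : ℤ) = 2 * (b1 : ℤ) + 1 by omega)
      have qb2 : (b2 : ℚ) = (a1 : ℚ) + (b1 : ℚ) + 1 - (k1 : ℚ) := by
        exact_mod_cast (show (b2 : ℤ) = (a1 : ℤ) + (b1 : ℤ) + 1 - k1 by omega)
      rw [r2, r3, qL1, qL2, qb2]
      ring
    · have qL1 : (L1 : ℚ) = 2 * (a1 : ℚ) + 1 := by
        exact_mod_cast (show (L1 : ℤ) = 2 * (a1 : ℤ) + 1 by omega)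
      have qL2 : (L2 : ℚ) = 2 * (b1 : ℚ) + 2 := by
        exact_mod_cast (show (L2 : ℤ) = 2 * (b1 : ℤ) + 2 by omega)
      have qb2 : (b2 : ℚ) = (a1 : ℚ) + (b1 : ℚ) + 1 - (k1 : ℚ) := by
        exact_mod_cast (show (b2 : ℤ) = (a1 : ℤ) + (b1 : ℤ) + 1 - k1 by omega)
      rw [r2, r3, qL1, qL2, qb2]
      ring
    · have qL1 : (L1 : ℚ) = 2 * (a1 : ℚ) + 1 := by
        exact_mod_cast (show (L1 : ℤ) = 2 * (a1 : ℤ) + 1 by omega)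
      have qL2 : (L2 : ℚ) = 2 * (b1 : ℚ) + 1 := by
        exact_mod_cast (show (L2 : ℤ) = 2 * (b1 : ℤ) + 1 by omega)
      have qb2 : (b2 : ℚ) = (a1 : ℚ) + (b1 : ℚ) - (k1 : ℚ) := by
        exact_mod_cast (show (b2 : ℤ) = (a1 : ℤ) + (b1 : ℤ) - k1 by omega)
      rw [r2, r3, qL1, qL2, qb2]
      ring
  · -- K1 ≥ 0 and L3 ≤ L2 + 2 : T2 = 0, with A1 = K1
    have ha1k : (a1 : ℚ) = (k1 : ℚ) := by
      exact_mod_cast (show (a1 : ℤ) = k1 by omega)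
    rw [tet_zero (-(k1 + 1) - 1) (by omega)]
    simp only [g1, g2, g3, g4, g5, g6]
    push_cast
    rcases Nat.mod_two_eq_zero_or_one L1 with hp1 | hp1 <;>
      rcases Nat.mod_two_eq_zero_or_one L2 with hp2 | hp2
    · have qL1 : (L1 : ℚ) = 2 * (a1 : ℚ) + 2 := by
        exact_mod_cast (show (L1 : ℤ) = 2 * (a1 : ℤ) + 2 by omega)
      have qL2 : (L2 : ℚ) = 2 * (b1 : ℚ) + 2 := by
        exact_mod_cast (show (L2 : ℤ) = 2 * (b1 : ℤ) + 2 by omega)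
      have qb2 : (b2 : ℚ) = (a1 : ℚ) + (b1 : ℚ) + 1 - (k1 : ℚ) := by
        exact_mod_cast (show (b2 : ℤ) = (a1 : ℤ) + (b1 : ℤ) + 1 - k1 by omega)
      rw [r2, r3, qL1, qL2, qb2, ha1k]
      ring
    · have qL1 : (L1 : ℚ) = 2 * (a1 : ℚ) + 2 := by
        exact_mod_cast (show (L1 : ℤ) = 2 * (a1 : ℤ) + 2 by omega)
      have qL2 : (L2 : ℚ) = 2 * (b1 : ℚ) + 1 := by
        exact_mod_cast (show (L2 : ℤ) = 2 * (b1 : ℤ) + 1 by omega)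
      have qb2 : (b2 : ℚ) = (a1 : ℚ) + (b1 : ℚ) + 1 - (k1 : ℚ) := by
        exact_mod_cast (show (b2 : ℤ) = (a1 : ℤ) + (b1 : ℤ) + 1 - k1 by omega)
      rw [r2, r3, qL1, qL2, qb2, ha1k]
      ring
    · have qL1 : (L1 : ℚ) = 2 * (a1 : ℚ) + 1 := by
        exact_mod_cast (show (L1 : ℤ) = 2 * (a1 : ℤ) + 1 by omega)
      have qL2 : (L2 : ℚ) = 2 * (b1 : ℚ) + 2 := by
        exact_mod_cast (show (L2 : ℤ) = 2 * (b1 : ℤ) + 2 by omega)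
      have qb2 : (b2 : ℚ) = (a1 : ℚ) + (b1 : ℚ) + 1 - (k1 : ℚ) := by
        exact_mod_cast (show (b2 : ℤ) = (a1 : ℤ) + (b1 : ℤ) + 1 - k1 by omega)
      rw [r2, r3, qL1, qL2, qb2, ha1k]
      ring
    · have qL1 : (L1 : ℚ) = 2 * (a1 : ℚ) + 1 := by
        exact_mod_cast (show (L1 : ℤ) = 2 * (a1 : ℤ) + 1 by omega)
      have qL2 : (L2 : ℚ) = 2 * (b1 : ℚ) + 1 := by
        exact_mod_cast (show (L2 : ℤ) = 2 * (b1 : ℤ) + 1 by omega)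
      have qb2 : (b2 : ℚ) = (a1 : ℚ) + (b1 : ℚ) - (k1 : ℚ) := by
        exact_mod_cast (show (b2 : ℤ) = (a1 : ℤ) + (b1 : ℤ) - k1 by omega)
      rw [r2, r3, qL1, qL2, qb2, ha1k]
      ring

theorem count_distinct_degrees (L1 L2 L3 : ℕ) (h1 : 3 ≤ L1) (h12 : L1 < L2) (h23 : L2 < L3)
    (heven : Even (L1 + L2 + L3)) :
    let A1 : ℚ := ((L1 - 1) / 2 : ℕ)
    let B1 : ℚ := ((L2 - 1) / 2 : ℕ)
    let B2 : ℚ := ((L3 - 1) / 2 : ℕ)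
    let K1 : ℚ := ((L1 : ℚ) + L2 - L3) / 2
    let K2 : ℚ := ((L1 : ℚ) - L2 + L3) / 2
    let K3 : ℚ := (-(L1 : ℚ) + L2 + L3) / 2
    ((S L1 L2 L3).ncard : ℚ) =
      (((L1 + 1) / 2 : ℕ) : ℚ) * (((L2 + 1) / 2 : ℕ) : ℚ) * (((L3 + 1) / 2 : ℕ) : ℚ)
      - (if L2 + 3 ≤ L3 ∧ L3 ≤ L1 + L2 + 1 then g1 A1 K1
         else if L1 + L2 + 1 ≤ L3 then g2 A1 K1 else 0)
      - (if (L1 + 2 ≤ L2 ∧ Odd L1) ∨ Even L1 then g3 A1 B1 K1 else 0)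
      - g4 A1 B1 K1
      - (if L1 + 3 ≤ L2 then g5 A1 B2 K2 else 0)
      - g4 A1 B2 K2
      - g6 B1 B2 K3 := by
  intro A1 B1 B2 K1 K2 K3
  exact main_count L1 L2 L3 h1 h12 h23 heven
end

section
/- Let L be an even natural number with L ≥ 4. Then the cardinality of the set of sextuples (a,b,c,d,e,f) in S(L,L,L) that additionally satisfy a ≤ b and b ≤ c equals (L/2)(L/2+1)(L/2+2)/6 − ⌊(L/2−1)(L/2+1)(L−3)/24⌋, where the first division is exact and ⌊·⌋ denotes the integer floor of the quotient. -/
/-! ### Auxiliary definitions: reduction to triples `(d,e,f)` -/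

def tbox (n : ℕ) : Finset (ℕ × ℕ × ℕ) := Finset.range n ×ˢ Finset.range n ×ˢ Finset.range n

def G (L : ℕ) : Finset (ℕ × ℕ × ℕ) :=
  (tbox (L+1)).filter (fun x => x.2.1 ≤ x.1 ∧ x.2.2 ≤ x.2.1 ∧ 1 ≤ x.2.1 ∧
    x.1 + x.2.1 ≤ L ∧ (x.1 + x.2.1) % 2 = 0 ∧ (x.2.1 + x.2.2) % 2 = 0)

def Slice (m : ℕ) : Finset (ℕ × ℕ × ℕ) :=
  (tbox (2*m+3)).filter (fun x => x.1 + x.2.1 = 2*m+2 ∧ x.2.1 ≤ x.1 ∧ x.2.2 ≤ x.2.1 ∧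
    1 ≤ x.2.1 ∧ (x.2.1 + x.2.2) % 2 = 0)

/-! ### Counting lemmas -/

lemma count_mod2 (n : ℕ) : (((Finset.range n).filter (fun f => f % 2 = 0)).card = (n+1)/2)
    ∧ (((Finset.range n).filter (fun f => f % 2 = 1)).card = n/2) := by
  induction n with
  | zero => simp
  | succ k ih =>
    rw [Finset.range_add_one, Finset.filter_insert, Finset.filter_insert]
    rcases Nat.mod_two_eq_zero_or_one k with h | h <;>
      simp [h, Finset.card_insert_of_notMem, ih.1, ih.2] <;> omega

lemma fcount (e : ℕ) :
    ((Finset.range (e+1)).filter (fun f => (e + f) % 2 = 0)).card = e / 2 + 1 := by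
  have hc : (Finset.range (e+1)).filter (fun f => (e + f) % 2 = 0)
      = (Finset.range (e+1)).filter (fun f => f % 2 = e % 2) := by
    apply Finset.filter_congr; intro x _; constructor <;> intro h <;> omega
  rcases Nat.mod_two_eq_zero_or_one e with h | h <;> rw [hc, h]
  · rw [(count_mod2 (e+1)).1]; omega
  · rw [(count_mod2 (e+1)).2]; omega

lemma sumIcc (n : ℕ) : (∑ e ∈ Finset.Icc 1 n, (e/2+1)) = n + n*n/4 := by
  induction n with
  | zero => simp
  | succ k ih =>
    rw [Finset.sum_Icc_succ_top (by omega), ih]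
    obtain ⟨j, rfl | rfl⟩ : ∃ j, k = 2*j ∨ k = 2*j+1 := ⟨k/2, by omega⟩
    · have h1 : 2*j*(2*j) = 4*(j*j) := by ring
      have h2 : (2*j+1)*(2*j+1) = 4*(j*j)+4*j+1 := by ring
      rw [h1, h2]; omega
    · have h1 : (2*j+1)*(2*j+1) = 4*(j*j)+4*j+1 := by ring
      have h2 : (2*j+1+1)*(2*j+1+1) = 4*(j*j)+8*j+4 := by ring
      rw [h1, h2]; omega

lemma slice_card (m : ℕ) : (Slice m).card = (m+1) + (m+1)*(m+1)/4 := by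
  have hb : Slice m = (Finset.Icc 1 (m+1)).biUnion (fun e =>
      {2*m+2-e} ×ˢ ({e} ×ˢ (Finset.range (e+1)).filter (fun f => (e+f) % 2 = 0))) := by
    ext ⟨d, e, f⟩
    simp only [Slice, tbox, Finset.mem_filter, Finset.mem_product, Finset.mem_range,
      Finset.mem_biUnion, Finset.mem_Icc, Finset.mem_singleton]
    constructor
    · rintro ⟨⟨hd, he, hf⟩, h1, h2, h3, h4, h5⟩
      exact ⟨e, ⟨by omega, by omega⟩, by omega, rfl, by omega, h5⟩
    · rintro ⟨e', ⟨he1, he2⟩, rfl, rfl, hf, hp⟩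
      refine ⟨⟨by omega, by omega, by omega⟩, by omega, by omega, by omega, by omega, hp⟩
  rw [hb, Finset.card_biUnion]
  · have : ∀ e ∈ Finset.Icc 1 (m+1),
        ({2*m+2-e} ×ˢ ({e} ×ˢ (Finset.range (e+1)).filter (fun f => (e+f) % 2 = 0))).card
          = e/2 + 1 := by
      intro e _
      rw [Finset.card_product, Finset.card_product, Finset.card_singleton,
        Finset.card_singleton, fcount]
      ring
    rw [Finset.sum_congr rfl this, sumIcc]
  · intro a _ b _ hab
    simp only [Finset.disjoint_left, Finset.mem_product, Finset.mem_singleton]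
    rintro ⟨x, y, z⟩ ⟨_, h1, _⟩ ⟨_, h2, _⟩
    exact hab (h1.symm.trans h2)

lemma gmono (m : ℕ) : (tbox (2*m+3)).filter (fun x => x.2.1 ≤ x.1 ∧ x.2.2 ≤ x.2.1 ∧ 1 ≤ x.2.1 ∧
    x.1 + x.2.1 ≤ 2*m ∧ (x.1 + x.2.1) % 2 = 0 ∧ (x.2.1 + x.2.2) % 2 = 0) = G (2*m) := by
  ext ⟨d, e, f⟩
  simp only [G, tbox, Finset.mem_filter, Finset.mem_product, Finset.mem_range]
  omega

lemma grec (m : ℕ) : (G (2*m+2)).card = (G (2*m)).card + ((m+1) + (m+1)*(m+1)/4) := by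
  have hsplit : G (2*m+2) = (tbox (2*m+3)).filter (fun x => x.2.1 ≤ x.1 ∧ x.2.2 ≤ x.2.1 ∧
      1 ≤ x.2.1 ∧ x.1 + x.2.1 ≤ 2*m ∧ (x.1 + x.2.1) % 2 = 0 ∧ (x.2.1 + x.2.2) % 2 = 0)
      ∪ Slice m := by
    ext ⟨d, e, f⟩
    simp only [G, Slice, tbox, Finset.mem_filter, Finset.mem_product, Finset.mem_range,
      Finset.mem_union]
    omega
  have hdisj : Disjoint ((tbox (2*m+3)).filter (fun x => x.2.1 ≤ x.1 ∧ x.2.2 ≤ x.2.1 ∧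
      1 ≤ x.2.1 ∧ x.1 + x.2.1 ≤ 2*m ∧ (x.1 + x.2.1) % 2 = 0 ∧ (x.2.1 + x.2.2) % 2 = 0))
      (Slice m) := by
    simp only [Finset.disjoint_left, Slice, tbox, Finset.mem_filter, Finset.mem_product,
      Finset.mem_range]
    rintro ⟨d, e, f⟩ h1 h2
    omega
  rw [hsplit, Finset.card_union_of_disjoint hdisj, gmono, slice_card]

/-! ### Arithmetic lemmas -/

lemma mod_eq_of_zmod (n a b : ℕ) (h : (a : ZMod n) = (b : ZMod n)) (hb : b % n = b) :
    a % n = b := by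
  have := (ZMod.natCast_eq_natCast_iff a b n).mp h
  rw [Nat.ModEq] at this
  rw [this, hb]

lemma m6 (a : ℕ) : a*(a+1)*(a+2) % 6 = 0 := by
  apply mod_eq_of_zmod 6 _ 0 _ rfl
  have hz : ∀ z : ZMod 6, z*(z+1)*(z+2) = 0 := by decide
  push_cast
  exact hz a

lemma w1 (i : ℕ) : (2*i+1)*(2*i+2+1)*(2*(2*i)+1) % 24 = 3 := by
  apply mod_eq_of_zmod 24 _ 3 _ rfl
  have hz : ∀ z : ZMod 24, (2*z+1)*(2*z+2+1)*(2*(2*z)+1) = 3 := by decide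
  push_cast
  exact hz i

lemma w2 (i : ℕ) : (2*i+2)*(2*i+2+1+1)*(2*(2*i)+3) % 24 = 0 := by
  apply mod_eq_of_zmod 24 _ 0 _ rfl
  have hz : ∀ z : ZMod 24, (2*z+2)*(2*z+2+1+1)*(2*(2*z)+3) = 0 := by decide
  push_cast
  exact hz i

lemma w4 (i : ℕ) : (2*i+1+1)*(2*i+1+2+1)*(2*(2*i+1)+1) % 24 = 0 := by
  apply mod_eq_of_zmod 24 _ 0 _ rfl
  have hz : ∀ z : ZMod 24, (2*z+1+1)*(2*z+1+2+1)*(2*(2*z+1)+1) = 0 := by decide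
  push_cast
  exact hz i

lemma w5 (i : ℕ) : (2*i+1+2)*(2*i+1+2+1+1)*(2*(2*i+1)+3) % 24 = 3 := by
  apply mod_eq_of_zmod 24 _ 3 _ rfl
  have hz : ∀ z : ZMod 24, (2*z+1+2)*(2*z+1+2+1+1)*(2*(2*z+1)+3) = 3 := by decide
  push_cast
  exact hz i

lemma stepArith (m : ℕ) (hm : 2 ≤ m) :
    (m+1) * (m+1+1) * (m+1+2) / 6 + (m-1) * (m+1) * (2*m-3) / 24
      = m * (m+1) * (m+2) / 6 + (m+1-1) * (m+1+1) * (2*(m+1)-3) / 24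
        + ((m+1) + (m+1)*(m+1)/4) := by
  have hA' := m6 (m+1)
  have hA := m6 m
  obtain ⟨k, rfl⟩ : ∃ k, m = k+2 := ⟨m-2, by omega⟩
  have e1 : k+2-1 = k+1 := by omega
  have e2 : 2*(k+2)-3 = 2*k+1 := by omega
  have e3 : k+2+1-1 = k+2 := by omega
  have e4 : 2*(k+2+1)-3 = 2*k+3 := by omega
  rw [e1, e2, e3, e4]
  obtain ⟨i, rfl | rfl⟩ : ∃ i, k = 2*i ∨ k = 2*i+1 := ⟨k/2, by omega⟩
  · have hB : (2*i+1)*(2*i+2+1)*(2*(2*i)+1) % 24 = 3 := w1 i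
    have hB' : (2*i+2)*(2*i+2+1+1)*(2*(2*i)+3) % 24 = 0 := w2 i
    have hC : (2*i+2+1)*(2*i+2+1) % 4 = 1 := by
      have h : (2*i+2+1)*(2*i+2+1) = 4*(i*i+3*i+2)+1 := by ring
      rw [h]; omega
    have key : 4*((2*i+2+1)*(2*i+2+1+1)*(2*i+2+1+2)) + (2*i+1)*(2*i+2+1)*(2*(2*i)+1) + 3
        = 4*((2*i+2)*(2*i+2+1)*(2*i+2+2)) + (2*i+2)*(2*i+2+1+1)*(2*(2*i)+3)
          + 24*(2*i+2+1) + 6*((2*i+2+1)*(2*i+2+1)) := by ring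
    set n1 := (2*i+2+1)*(2*i+2+1+1)*(2*i+2+1+2) with hn1
    set n2 := (2*i+1)*(2*i+2+1)*(2*(2*i)+1) with hn2
    set n3 := (2*i+2)*(2*i+2+1)*(2*i+2+2) with hn3
    set n4 := (2*i+2)*(2*i+2+1+1)*(2*(2*i)+3) with hn4
    set n5 := (2*i+2+1)*(2*i+2+1) with hn5
    omega
  · have hB : (2*i+1+1)*(2*i+1+2+1)*(2*(2*i+1)+1) % 24 = 0 := w4 i
    have hB' : (2*i+1+2)*(2*i+1+2+1+1)*(2*(2*i+1)+3) % 24 = 3 := w5 i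
    have hC : (2*i+1+2+1)*(2*i+1+2+1) % 4 = 0 := by
      have h : (2*i+1+2+1)*(2*i+1+2+1) = 4*((i+2)*(i+2)) := by ring
      rw [h]; omega
    have key : 4*((2*i+1+2+1)*(2*i+1+2+1+1)*(2*i+1+2+1+2)) + (2*i+1+1)*(2*i+1+2+1)*(2*(2*i+1)+1) + 3
        = 4*((2*i+1+2)*(2*i+1+2+1)*(2*i+1+2+2)) + (2*i+1+2)*(2*i+1+2+1+1)*(2*(2*i+1)+3)
          + 24*(2*i+1+2+1) + 6*((2*i+1+2+1)*(2*i+1+2+1)) := by ring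
    set n1 := (2*i+1+2+1)*(2*i+1+2+1+1)*(2*i+1+2+1+2) with hn1
    set n2 := (2*i+1+1)*(2*i+1+2+1)*(2*(2*i+1)+1) with hn2
    set n3 := (2*i+1+2)*(2*i+1+2+1)*(2*i+1+2+2) with hn3
    set n4 := (2*i+1+2)*(2*i+1+2+1+1)*(2*(2*i+1)+3) with hn4
    set n5 := (2*i+1+2+1)*(2*i+1+2+1) with hn5
    omega

lemma mainG : ∀ m : ℕ, 2 ≤ m →
    ((G (2*m)).card : ℤ) = ((m*(m+1)*(m+2)/6 : ℕ) : ℤ) - (((m-1)*(m+1)*(2*m-3)/24 : ℕ) : ℤ) := by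
  intro m hm
  induction m, hm using Nat.le_induction with
  | base => rw [show (G (2*2)).card = 4 from by decide]; norm_num
  | succ n hn ih =>
    conv_lhs => rw [show 2*(n+1) = 2*n+2 by ring]
    rw [grec n, Nat.cast_add, ih]
    have hs := stepArith n hn
    set a1 := (n+1) * (n+1+1) * (n+1+2) / 6 with ha1
    set a2 := (n-1) * (n+1) * (2*n-3) / 24 with ha2
    set a3 := n * (n+1) * (n+2) / 6 with ha3
    set a4 := (n+1-1) * (n+1+1) * (2*(n+1)-3) / 24 with ha4
    set a5 := (n+1)*(n+1)/4 with ha5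
    omega

lemma bridge (L : ℕ) (hLe : Even L) :
    {x ∈ S L L L | x.1 ≤ x.2.1 ∧ x.2.1 ≤ x.2.2.1}.ncard = (G L).card := by
  obtain ⟨t, rfl⟩ := hLe
  set ψ : ℕ × ℕ × ℕ → ℕ × ℕ × ℕ × ℕ × ℕ × ℕ := fun x =>
    ((t+t-x.1-x.2.1)/2, (t+t-x.1-x.2.2)/2, (t+t-x.2.1-x.2.2)/2, x.1, x.2.1, x.2.2) with hψ
  have hset : {x ∈ S (t+t) (t+t) (t+t) | x.1 ≤ x.2.1 ∧ x.2.1 ≤ x.2.2.1} = ψ '' ↑(G (t+t)) := by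
    ext ⟨a, b, c, d, e, f⟩
    simp only [S, G, tbox, Set.mem_setOf_eq, Set.mem_sep_iff, Set.mem_image,
      Finset.coe_filter, Finset.mem_product, Finset.mem_range, Prod.exists, hψ,
      Prod.mk.injEq, Set.mem_setOf_eq]
    constructor
    · rintro ⟨⟨h1, h2, h3, h4, h5, h6⟩, h7, h8⟩
      exact ⟨d, e, f, ⟨⟨by omega, by omega, by omega⟩, by omega, by omega, by omega,
        by omega, by omega, by omega⟩, by omega, by omega, by omega, rfl, rfl, rfl⟩
    · rintro ⟨d', e', f', ⟨⟨hb1, hb2, hb3⟩, h1, h2, h3, h4, h5, h6⟩,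
        ha, hb, hc, rfl, rfl, rfl⟩
      refine ⟨⟨by omega, by omega, by omega, by omega, by omega, by omega⟩, by omega, by omega⟩
  rw [hset, Set.ncard_image_of_injOn, Set.ncard_coe_finset]
  rintro ⟨d, e, f⟩ _ ⟨d', e', f'⟩ _ h
  simp only [hψ, Prod.mk.injEq] at h
  obtain ⟨-, -, -, rfl, rfl, rfl⟩ := h
  rfl

theorem count_all_degrees_equal (L : ℕ) (hL : 4 ≤ L) (hLe : Even L) :
    ({x ∈ S L L L | x.1 ≤ x.2.1 ∧ x.2.1 ≤ x.2.2.1}.ncard : ℤ) =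
      ((L / 2 * (L / 2 + 1) * (L / 2 + 2) / 6 : ℕ) : ℤ)
      - (((L / 2 - 1) * (L / 2 + 1) * (L - 3) / 24 : ℕ) : ℤ) := by
  rw [bridge L hLe]
  obtain ⟨t, rfl⟩ := hLe
  have h2 : (t+t)/2 = t := by omega
  have h3 : t+t-3 = 2*t-3 := by omega
  have h4 : t+t = 2*t := by ring
  rw [h2, h3, h4]
  exact mainG t (by omega)
end

section
/- Let L1 and Λ be natural numbers with 3 ≤ L1 < Λ and L1 even. Then the cardinality of the set of sextuples (a,b,c,d,e,f) in S(L1,Λ,Λ) satisfying b ≤ c equals the cardinality of the set of triples (a,b,c) of natural numbers satisfying 2a+1 ≤ L1, 2b+1 ≤ Λ, b ≤ c, 2c+1 ≤ Λ, L1+2c ≥ 2a+2b, L1+2b ≥ 2a+2c, and 2Λ+2a ≥ L1+2b+2c. -/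
theorem count_two_larger_degrees_equal (L1 Λ : ℕ) (h1 : 3 ≤ L1) (h2 : L1 < Λ)
    (heven : Even L1) :
    {x ∈ S L1 Λ Λ | x.2.1 ≤ x.2.2.1}.ncard =
      {(a, b, c) : ℕ × ℕ × ℕ |
        2 * a + 1 ≤ L1 ∧ 2 * b + 1 ≤ Λ ∧ b ≤ c ∧ 2 * c + 1 ≤ Λ ∧
        2 * a + 2 * b ≤ L1 + 2 * c ∧ 2 * a + 2 * c ≤ L1 + 2 * b ∧
        L1 + 2 * b + 2 * c ≤ 2 * Λ + 2 * a}.ncard := by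
  obtain ⟨k, hk⟩ := heven
  have himg : (fun x : ℕ × ℕ × ℕ × ℕ × ℕ × ℕ => (x.1, x.2.1, x.2.2.1)) ''
      {x ∈ S L1 Λ Λ | x.2.1 ≤ x.2.2.1} =
      {(a, b, c) : ℕ × ℕ × ℕ |
        2 * a + 1 ≤ L1 ∧ 2 * b + 1 ≤ Λ ∧ b ≤ c ∧ 2 * c + 1 ≤ Λ ∧
        2 * a + 2 * b ≤ L1 + 2 * c ∧ 2 * a + 2 * c ≤ L1 + 2 * b ∧
        L1 + 2 * b + 2 * c ≤ 2 * Λ + 2 * a} := by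
    ext ⟨a, b, c⟩
    simp only [Set.mem_image, Set.mem_setOf_eq, Prod.exists, S]
    constructor
    · rintro ⟨a', b', c', d, e, f, ⟨⟨h1', h2', h3', h4, h5, h6⟩, hbc⟩, heq⟩
      simp only [Prod.mk.injEq] at heq
      obtain ⟨rfl, rfl, rfl⟩ := heq
      omega
    · rintro ⟨ha, hb, hbc, hc, hd, he, hf⟩
      exact ⟨a, b, c, k + c - a - b, k + b - a - c, Λ + a - k - b - c,
        ⟨⟨by omega, by omega, by omega, by omega, by omega, by omega⟩, hbc⟩, rfl⟩
  rw [← himg]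
  rw [Set.ncard_image_of_injOn]
  rintro ⟨a, b, c, d, e, f⟩ ⟨⟨h1', h2', h3', _, _, _⟩, _⟩
    ⟨a', b', c', d', e', f'⟩ ⟨⟨g1, g2, g3, _, _, _⟩, _⟩ heq
  simp only [S, Set.mem_setOf_eq] at *
  simp only [Prod.mk.injEq] at heq ⊢
  obtain ⟨rfl, rfl, rfl⟩ := heq
  omega
end
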